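/- Let W and D be n×n real symmetric positive definite matrices, let α > 0 be the smallest eigenvalue of D, and let g ∈ ℝⁿ. Suppose λ ∈ ℝⁿ solves the linear complementarity problem LCP(W, g) and λ̂ ∈ ℝⁿ solves LCP(D, g). Then the perturbation bound ‖λ − λ̂‖₂ ≤ (1/α) · ‖W − D‖_op · ‖λ‖₂ holds, where ‖W − D‖_op is the operator norm of W − D with respect to the Euclidean norm. In particular, the approximation error of the surrogate solution λ̂ is controlled by the distance ‖W − D‖_op between the true and surrogate matrices. -/

import Mathlib

open Matrix BigOperators

/-- Euclidean norm on `ℝⁿ`. -/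
noncomputable def enorm {n : ℕ} (x : Fin n → ℝ) : ℝ :=
  Real.sqrt (∑ i, (x i) ^ 2)

/-- Operator norm of a real matrix acting between Euclidean spaces. -/
noncomputable def opNorm {m n : ℕ} (A : Matrix (Fin m) (Fin n) ℝ) : ℝ :=
  ‖LinearMap.toContinuousLinearMap (Matrix.toEuclideanLin A)‖

lemma enorm_eq {n : ℕ} (x : Fin n → ℝ) :
    _root_.enorm x = ‖(WithLp.equiv 2 (Fin n → ℝ)).symm x‖ := by
  simp [_root_.enorm, EuclideanSpace.norm_eq, Real.norm_eq_abs, sq_abs]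

lemma enorm_nonneg' {n : ℕ} (x : Fin n → ℝ) : 0 ≤ _root_.enorm x :=
  Real.sqrt_nonneg _

lemma enorm_mulVec_le {m n : ℕ} (A : Matrix (Fin m) (Fin n) ℝ) (x : Fin n → ℝ) :
    _root_.enorm (A.mulVec x) ≤ opNorm A * _root_.enorm x := by
  rw [enorm_eq, enorm_eq, WithLp.equiv_symm_apply, ← Matrix.toEuclideanLin_apply_piLp_toLp]
  exact (LinearMap.toContinuousLinearMap (Matrix.toEuclideanLin A)).le_opNorm _

lemma abs_dotProduct_le {n : ℕ} (x y : Fin n → ℝ) :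
    |x ⬝ᵥ y| ≤ _root_.enorm x * _root_.enorm y := by
  rw [enorm_eq, enorm_eq]
  have h := abs_real_inner_le_norm ((WithLp.equiv 2 (Fin n → ℝ)).symm x)
    ((WithLp.equiv 2 (Fin n → ℝ)).symm y)
  have h2 : (inner ℝ ((WithLp.equiv 2 (Fin n → ℝ)).symm x)
      ((WithLp.equiv 2 (Fin n → ℝ)).symm y) : ℝ) = x ⬝ᵥ y := by
    simp [PiLp.inner_apply, RCLike.inner_apply, dotProduct, mul_comm]
  rwa [h2] at h

/-- Perturbation bound for LCP solutions: if `λ` solves `LCP(W, g)` and `λ̂` solves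
`LCP(D, g)`, where `W, D` are symmetric positive definite and the smallest eigenvalue
`α > 0` of `D` satisfies `xᵀDx ≥ α‖x‖₂²`, then `‖λ - λ̂‖₂ ≤ (1/α)·‖W - D‖_op·‖λ‖₂`. -/
theorem lcp_perturbation_bound (n : ℕ) (W D : Matrix (Fin n) (Fin n) ℝ)
    (hW : W.PosDef) (hD : D.PosDef)
    (α : ℝ) (hα : 0 < α)
    (hEig : ∀ x : Fin n → ℝ, α * _root_.enorm x ^ 2 ≤ x ⬝ᵥ D.mulVec x)
    (g lam lamhat : Fin n → ℝ)
    (hlam₁ : ∀ i, 0 ≤ lam i) (hlam₂ : ∀ i, 0 ≤ (W.mulVec lam + g) i)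
    (hlam₃ : lam ⬝ᵥ (W.mulVec lam + g) = 0)
    (hhat₁ : ∀ i, 0 ≤ lamhat i) (hhat₂ : ∀ i, 0 ≤ (D.mulVec lamhat + g) i)
    (hhat₃ : lamhat ⬝ᵥ (D.mulVec lamhat + g) = 0) :
    _root_.enorm (lam - lamhat) ≤ (1 / α) * opNorm (W - D) * _root_.enorm lam := by
  set e := lam - lamhat with he
  have hcross1 : 0 ≤ lamhat ⬝ᵥ (W.mulVec lam + g) :=
    Finset.sum_nonneg fun i _ => mul_nonneg (hhat₁ i) (hlam₂ i)
  have hcross2 : 0 ≤ lam ⬝ᵥ (D.mulVec lamhat + g) :=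
    Finset.sum_nonneg fun i _ => mul_nonneg (hlam₁ i) (hhat₂ i)
  have hkey : e ⬝ᵥ (W.mulVec lam - D.mulVec lamhat) ≤ 0 := by
    have hexp : e ⬝ᵥ (W.mulVec lam - D.mulVec lamhat)
        = lam ⬝ᵥ (W.mulVec lam + g) - lamhat ⬝ᵥ (W.mulVec lam + g)
          - lam ⬝ᵥ (D.mulVec lamhat + g) + lamhat ⬝ᵥ (D.mulVec lamhat + g) := by
      rw [he]
      simp only [sub_dotProduct, dotProduct_sub, dotProduct_add]
      ring
    rw [hexp, hlam₃, hhat₃]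
    linarith
  have hsplit : e ⬝ᵥ D.mulVec e
      = e ⬝ᵥ (W.mulVec lam - D.mulVec lamhat) - e ⬝ᵥ ((W - D).mulVec lam) := by
    rw [he]
    simp only [Matrix.sub_mulVec, Matrix.mulVec_sub, dotProduct_sub]
    ring
  have hbound : e ⬝ᵥ D.mulVec e ≤ _root_.enorm e * (opNorm (W - D) * _root_.enorm lam) := by
    rw [hsplit]
    have h1 : - (e ⬝ᵥ ((W - D).mulVec lam)) ≤ |e ⬝ᵥ ((W - D).mulVec lam)| :=
      neg_le_abs _
    have h2 := abs_dotProduct_le e ((W - D).mulVec lam)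
    have h3 := enorm_mulVec_le (W - D) lam
    have h4 := enorm_nonneg' e
    nlinarith
  have hfin : α * _root_.enorm e ^ 2 ≤ _root_.enorm e * (opNorm (W - D) * _root_.enorm lam) :=
    le_trans (hEig e) hbound
  rcases eq_or_lt_of_le (enorm_nonneg' e) with h0 | h0
  · rw [← h0]
    have h5 : 0 ≤ opNorm (W - D) := norm_nonneg _
    have h6 := enorm_nonneg' lam
    positivity
  · rw [div_mul_eq_mul_div, div_mul_eq_mul_div, le_div_iff₀ hα, one_mul]
    nlinarith
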